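/- Let q ≥ 1, let ω_1,…,ω_q ∈ ℂ be algebraically independent over ℚ, and let χ ∈ ℂ be integral over the subring ℤ[ω_1,…,ω_q] of ℂ, of degree d over its fraction field. Then there exists a constant c > 0, depending only on ω_1,…,ω_q and χ, such that for every nonzero polynomial P ∈ ℤ[X_1,…,X_q,Y] there exist polynomials Q, Q_1,…,Q_d ∈ ℤ[X_1,…,X_q] with Q(ω_1,…,ω_q) ≠ 0, satisfying Q(ω_1,…,ω_q)·P(ω_1,…,ω_q,χ) = Σ_{i=1}^{d} Q_i(ω_1,…,ω_q)·χ^{i−1}, and such that the types of Q, Q_1,…,Q_d are all at most c·t(P) + c·log(2 + deg P). -/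

import Mathlib

/-- The height of a multivariate integer polynomial: the maximum absolute value
of its coefficients. -/
noncomputable def mvHeight {σ : Type*} (P : MvPolynomial σ ℤ) : ℕ :=
  P.support.sup fun m => (P.coeff m).natAbs

/-- The type of a multivariate integer polynomial: the maximum of its total
degree and the logarithm of its height. -/
noncomputable def mvType {σ : Type*} (P : MvPolynomial σ ℤ) : ℝ :=
  max (P.totalDegree : ℝ) (Real.log (mvHeight P))

namespace AuxTEB
open MvPolynomial Finset

variable {σ : Type*} {ι : Type*}

lemma natAbs_coeff_le (f : MvPolynomial σ ℤ) (m : σ →₀ ℕ) :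
    (f.coeff m).natAbs ≤ mvHeight f := by
  by_cases h : f.coeff m = 0
  · simp [h]
  · exact Finset.le_sup (f := fun m => (f.coeff m).natAbs)
      (MvPolynomial.mem_support_iff.2 h)

lemma mvHeight_le_iff {f : MvPolynomial σ ℤ} {n : ℕ} :
    mvHeight f ≤ n ↔ ∀ m, (f.coeff m).natAbs ≤ n := by
  constructor
  · exact fun h m => le_trans (natAbs_coeff_le f m) h
  · intro h
    exact Finset.sup_le fun m _ => h m

lemma mvHeight_add_le (f g : MvPolynomial σ ℤ) :
    mvHeight (f + g) ≤ mvHeight f + mvHeight g := by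
  rw [mvHeight_le_iff]
  intro m
  rw [MvPolynomial.coeff_add]
  exact le_trans (Int.natAbs_add_le _ _)
    (Nat.add_le_add (natAbs_coeff_le f m) (natAbs_coeff_le g m))

lemma mvHeight_sum_le (s : Finset ι) (f : ι → MvPolynomial σ ℤ) :
    mvHeight (∑ i ∈ s, f i) ≤ ∑ i ∈ s, mvHeight (f i) := by
  induction s using Finset.cons_induction with
  | empty => simp [mvHeight]
  | cons a s ha ih =>
      rw [Finset.sum_cons, Finset.sum_cons]
      exact le_trans (mvHeight_add_le _ _) (Nat.add_le_add le_rfl ih)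

lemma mvHeight_mul_le (f g : MvPolynomial σ ℤ) :
    mvHeight (f * g) ≤ f.support.card * mvHeight f * mvHeight g := by
  rw [mvHeight_le_iff]
  intro m
  classical
  rw [MvPolynomial.coeff_mul]
  refine le_trans (nat_abs_sum_le _ _) ?_
  rw [← Finset.sum_filter_ne_zero]
  have hsub : (Finset.HasAntidiagonal.antidiagonal m).filter
      (fun x => (f.coeff x.1 * g.coeff x.2).natAbs ≠ 0) ⊆
      (Finset.HasAntidiagonal.antidiagonal m).filter (fun x => x.1 ∈ f.support) := by
    intro x hx
    simp only [Finset.mem_filter] at hx ⊢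
    refine ⟨hx.1, ?_⟩
    rw [MvPolynomial.mem_support_iff]
    intro h0
    exact hx.2 (by simp [h0])
  refine le_trans (Finset.sum_le_sum_of_subset hsub) ?_
  refine le_trans (Finset.sum_le_card_nsmul _ _ (mvHeight f * mvHeight g) ?_) ?_
  · intro x _
    rw [Int.natAbs_mul]
    exact Nat.mul_le_mul (natAbs_coeff_le f x.1) (natAbs_coeff_le g x.2)
  · rw [smul_eq_mul, mul_assoc]
    refine Nat.mul_le_mul_right _ ?_
    refine Finset.card_le_card_of_injOn Prod.fst ?_ ?_
    · intro x hx
      exact (Finset.mem_filter.1 hx).2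
    · intro x hx y hy hxy
      have hx' := Finset.HasAntidiagonal.mem_antidiagonal.1 (Finset.mem_filter.1 hx).1
      have hy' := Finset.HasAntidiagonal.mem_antidiagonal.1 (Finset.mem_filter.1 hy).1
      have : x.2 = y.2 := by
        have := hx'.trans hy'.symm
        rw [hxy] at this
        exact add_left_cancel this
      exact Prod.ext hxy this

lemma support_card_mul_le [DecidableEq σ] (f g : MvPolynomial σ ℤ) :
    (f * g).support.card ≤ f.support.card * g.support.card := by
  exact le_trans (Finset.card_le_card (MvPolynomial.support_mul f g))
    Finset.card_add_le

lemma mvHeight_pow_le (f : MvPolynomial σ ℤ) (n : ℕ) :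
    mvHeight (f ^ n) ≤ (f.support.card * mvHeight f) ^ n := by
  induction n with
  | zero =>
      simp only [pow_zero]
      rw [mvHeight_le_iff]
      intro m
      classical
      rw [MvPolynomial.coeff_one]
      split <;> simp
  | succ n ih =>
      rw [pow_succ, mul_comm (f ^ n) f, pow_succ]
      refine le_trans (mvHeight_mul_le f (f ^ n)) ?_
      rw [mul_comm ((f.support.card * mvHeight f) ^ n)]
      exact Nat.mul_le_mul le_rfl ih

lemma support_card_pow_le [DecidableEq σ] (f : MvPolynomial σ ℤ) (n : ℕ) :
    (f ^ n).support.card ≤ f.support.card ^ n := by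
  induction n with
  | zero =>
      simp only [pow_zero]
      have : (1 : MvPolynomial σ ℤ).support = {0} := by
        rw [show (1 : MvPolynomial σ ℤ) = MvPolynomial.monomial 0 1 by simp,
          MvPolynomial.support_monomial]
        simp
      simp [this]
  | succ n ih =>
      rw [pow_succ, pow_succ]
      exact le_trans (support_card_mul_le _ _) (Nat.mul_le_mul ih le_rfl)

lemma mvHeight_monomial_le (s : σ →₀ ℕ) (c : ℤ) :
    mvHeight (MvPolynomial.monomial s c) ≤ c.natAbs := by
  rw [mvHeight_le_iff]
  intro m
  classical
  rw [MvPolynomial.coeff_monomial]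
  split <;> simp

lemma support_card_monomial_le (s : σ →₀ ℕ) (c : ℤ) :
    (MvPolynomial.monomial s c).support.card ≤ 1 := by
  classical
  rw [MvPolynomial.support_monomial]
  split <;> simp

end AuxTEB
namespace AuxTEB
open MvPolynomial Finset

lemma log_le_log_of_nat {a : ℕ} {y : ℝ} (h : (a : ℝ) ≤ y) (hy : 1 ≤ y) :
    Real.log a ≤ Real.log y := by
  rcases Nat.eq_zero_or_pos a with rfl | ha
  · simpa using Real.log_nonneg hy
  · exact Real.log_le_log (by exact_mod_cast ha) h

lemma mvType_nonneg {σ : Type*} (f : MvPolynomial σ ℤ) : 0 ≤ mvType f :=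
  le_trans (by positivity) (le_max_left _ _)

lemma totalDegree_le_mvType {σ : Type*} (f : MvPolynomial σ ℤ) :
    (f.totalDegree : ℝ) ≤ mvType f := le_max_left _ _

lemma log_mvHeight_le_mvType {σ : Type*} (f : MvPolynomial σ ℤ) :
    Real.log (mvHeight f) ≤ mvType f := le_max_right _ _

lemma mvType_le {σ : Type*} {f : MvPolynomial σ ℤ} {r : ℝ}
    (h1 : (f.totalDegree : ℝ) ≤ r) (h2 : Real.log (mvHeight f) ≤ r) :
    mvType f ≤ r := max_le h1 h2

lemma mvHeight_pos {σ : Type*} {f : MvPolynomial σ ℤ} (hf : f ≠ 0) :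
    1 ≤ mvHeight f := by
  obtain ⟨m, hm⟩ := MvPolynomial.ne_zero_iff.1 hf
  exact le_trans (Int.natAbs_pos.2 hm) (natAbs_coeff_le f m)

-- exponent bound
lemma apply_le_sum {σ : Type*} (m : σ →₀ ℕ) (i : σ) : m i ≤ m.sum fun _ e => e := by
  by_cases h : m i = 0
  · simp [h]
  · exact Finset.single_le_sum (f := fun j => m j) (fun _ _ => Nat.zero_le _)
      (Finsupp.mem_support_iff.2 h)

lemma support_card_le {q : ℕ} (P : MvPolynomial (Fin q) ℤ) :
    P.support.card ≤ (P.totalDegree + 1) ^ q := by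
  classical
  have : P.support.card ≤ Fintype.card (Fin q → Fin (P.totalDegree + 1)) := by
    refine Finset.card_le_card_of_injOn
      (fun m i => (⟨min (m i) P.totalDegree, by omega⟩ : Fin (P.totalDegree + 1)))
      (fun m _ => Finset.mem_univ _) ?_
    intro m hm m' hm' h
    have hb : ∀ (n : Fin q →₀ ℕ), n ∈ P.support → ∀ i, n i ≤ P.totalDegree :=
      fun n hn i => le_trans (apply_le_sum n i) (MvPolynomial.le_totalDegree hn)
    ext i
    have := congrFun h i
    have h1 := hb m hm i
    have h2 := hb m' hm' i
    simpa [Fin.ext_iff, Nat.min_eq_left h1, Nat.min_eq_left h2] using this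
  simpa [Fintype.card_fun] using this

end AuxTEB
namespace AuxTEB
open MvPolynomial

lemma exists_ratio {q : ℕ} (ω : Fin q → ℂ) {z : ℂ}
    (hz : z ∈ IntermediateField.adjoin ℚ (Set.range ω)) :
    ∃ f g : MvPolynomial (Fin q) ℤ, (MvPolynomial.aeval ω) g ≠ 0 ∧
      z * MvPolynomial.aeval ω g = MvPolynomial.aeval ω f := by
  let T : IntermediateField ℚ ℂ :=
    { carrier := {z | ∃ f g : MvPolynomial (Fin q) ℤ, (MvPolynomial.aeval ω) g ≠ 0 ∧
        z * MvPolynomial.aeval ω g = MvPolynomial.aeval ω f}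
      mul_mem' := by
        rintro a b ⟨f1, g1, hg1, h1⟩ ⟨f2, g2, hg2, h2⟩
        refine ⟨f1 * f2, g1 * g2, by simp [hg1, hg2], ?_⟩
        rw [map_mul, map_mul, mul_mul_mul_comm a b, h1, h2]
      one_mem' := ⟨1, 1, by simp, by simp⟩
      add_mem' := by
        rintro a b ⟨f1, g1, hg1, h1⟩ ⟨f2, g2, hg2, h2⟩
        refine ⟨f1 * g2 + f2 * g1, g1 * g2, by simp [hg1, hg2], ?_⟩
        rw [map_add, map_mul, map_mul, map_mul]
        linear_combination (MvPolynomial.aeval ω g2) * h1 + (MvPolynomial.aeval ω g1) * h2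
      zero_mem' := ⟨0, 1, by simp, by simp⟩
      algebraMap_mem' := by
        intro r
        refine ⟨MvPolynomial.C r.num, MvPolynomial.C (r.den : ℤ), by simp, ?_⟩
        have key : (r : ℂ) * ((r.den : ℤ) : ℂ) = ((r.num : ℤ) : ℂ) := by
          push_cast
          rw [Rat.cast_def, div_mul_cancel₀]
          exact_mod_cast r.den_ne_zero
        simpa [MvPolynomial.aeval_C, eq_intCast, eq_ratCast] using key
      inv_mem' := by
        rintro x ⟨f, g, hg, h⟩
        by_cases hx : x = 0
        · exact ⟨0, 1, by simp, by simp [hx]⟩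
        · have hF : MvPolynomial.aeval ω f ≠ 0 := by
            rw [← h]; exact mul_ne_zero hx hg
          refine ⟨g, f, hF, ?_⟩
          rw [← h, inv_mul_cancel_left₀ hx] }
  have hsub : Set.range ω ⊆ (T : Set ℂ) := by
    rintro _ ⟨i, rfl⟩
    exact ⟨MvPolynomial.X i, 1, by simp, by simp⟩
  exact (IntermediateField.adjoin_le_iff.2 hsub) hz

end AuxTEB
namespace AuxTEB
open MvPolynomial Finset

lemma exists_relation {q : ℕ} (ω : Fin q → ℂ) (χ : ℂ)
    (hχ : IsIntegral (Algebra.adjoin ℤ (Set.range ω)) χ) (d : ℕ)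
    (hd : d = (minpoly (IntermediateField.adjoin ℚ (Set.range ω)) χ).natDegree) :
    1 ≤ d ∧ ∃ D : MvPolynomial (Fin q) ℤ, ∃ cf : ℕ → MvPolynomial (Fin q) ℤ,
      MvPolynomial.aeval ω D ≠ 0 ∧
      MvPolynomial.aeval ω D * χ ^ d =
        ∑ j ∈ Finset.range d, MvPolynomial.aeval ω (cf j) * χ ^ j := by
  set K := IntermediateField.adjoin ℚ (Set.range ω) with hK
  have hle : Algebra.adjoin ℤ (Set.range ω) ≤
      Subalgebra.restrictScalars ℤ K.toSubalgebra := by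
    rw [Algebra.adjoin_le_iff]
    intro x hx
    exact IntermediateField.subset_adjoin ℚ _ hx
  have hmem : ∀ r : Algebra.adjoin ℤ (Set.range ω), (r : ℂ) ∈ K :=
    fun r => hle r.2
  let φ : (Algebra.adjoin ℤ (Set.range ω)) →+* K :=
    { toFun := fun r => ⟨(r : ℂ), hmem r⟩
      map_one' := rfl
      map_mul' := fun _ _ => rfl
      map_zero' := rfl
      map_add' := fun _ _ => rfl }
  have hint : IsIntegral K χ := by
    obtain ⟨p, hpm, hp0⟩ := hχ
    refine ⟨p.map φ, hpm.map φ, ?_⟩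
    rw [Polynomial.eval₂_map]
    have hcomp : (algebraMap K ℂ).comp φ =
        algebraMap (Algebra.adjoin ℤ (Set.range ω)) ℂ := RingHom.ext fun r => rfl
    rw [hcomp]
    exact hp0
  have hd1 : 1 ≤ d := hd ▸ minpoly.natDegree_pos hint
  set μ := minpoly K χ with hμ
  have h0 : ∑ i ∈ Finset.range (d + 1), ((μ.coeff i : ℂ)) * χ ^ i = 0 := by
    have h := minpoly.aeval K χ
    rw [Polynomial.aeval_eq_sum_range] at h
    rw [← hd] at h
    rw [← h]
    refine Finset.sum_congr rfl fun i _ => ?_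
    rw [Algebra.smul_def]
    rfl
  have hcoeffd : (μ.coeff d : ℂ) = 1 := by
    rw [hd, (minpoly.monic hint).coeff_natDegree]
    simp
  have hχd : χ ^ d = -∑ j ∈ Finset.range d, ((μ.coeff j : ℂ)) * χ ^ j := by
    rw [Finset.sum_range_succ, hcoeffd, one_mul] at h0
    linear_combination h0
  choose F G hG hFG using fun j : ℕ => exists_ratio ω (SetLike.coe_mem (μ.coeff j))
  refine ⟨hd1, ∏ j ∈ Finset.range d, G j,
    fun j => -(F j * ∏ k ∈ (Finset.range d).erase j, G k), ?_, ?_⟩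
  · rw [map_prod]
    exact Finset.prod_ne_zero_iff.2 fun j _ => hG j
  · rw [hχd, mul_neg, Finset.mul_sum]
    rw [← Finset.sum_neg_distrib]
    refine Finset.sum_congr rfl fun j hj => ?_
    rw [map_neg, map_mul, map_prod, map_prod, ← Finset.mul_prod_erase _ _ hj]
    linear_combination (-(∏ x ∈ (Finset.range d).erase j, (MvPolynomial.aeval ω) (G x)) *
      χ ^ j) * hFG j

end AuxTEB
namespace AuxTEB
open MvPolynomial Finset

lemma recursion {q d : ℕ} (hd1 : 1 ≤ d) (ω : Fin q → ℂ) (χ : ℂ)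
    (D : MvPolynomial (Fin q) ℤ) (cf : ℕ → MvPolynomial (Fin q) ℤ)
    (hrel : MvPolynomial.aeval ω D * χ ^ d =
      ∑ j ∈ Finset.range d, MvPolynomial.aeval ω (cf j) * χ ^ j)
    (K1 K2 : ℕ)
    (hK1D : D.totalDegree ≤ K1) (hK1c : ∀ j < d, (cf j).totalDegree ≤ K1)
    (hK2 : D.support.card * mvHeight D +
      (∑ j ∈ Finset.range d, (cf j).support.card * mvHeight (cf j)) + 1 ≤ K2) :
    ∀ b : ℕ, ∃ A : ℕ → MvPolynomial (Fin q) ℤ,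
      ((MvPolynomial.aeval ω D) ^ b * χ ^ b =
        ∑ j ∈ Finset.range d, MvPolynomial.aeval ω (A j) * χ ^ j) ∧
      (∀ j < d, (A j).totalDegree ≤ K1 * b) ∧
      (∀ j < d, mvHeight (A j) ≤ K2 ^ (b + 1)) := by
  classical
  have hK2one : 1 ≤ K2 := le_trans (by omega) hK2
  intro b
  induction b with
  | zero =>
      refine ⟨fun j => if j = 0 then 1 else 0, ?_, ?_, ?_⟩
      · rw [Finset.sum_eq_single_of_mem 0 (Finset.mem_range.2 hd1)]
        · simp
        · intro j _ hj
          simp [hj]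
      · intro j _
        by_cases h0 : j = 0 <;> simp [h0]
      · intro j _
        by_cases h0 : j = 0
        · simp only [h0, if_pos rfl]
          calc mvHeight (1 : MvPolynomial (Fin q) ℤ) ≤ 1 := by
                have : (1 : MvPolynomial (Fin q) ℤ) = MvPolynomial.monomial 0 1 := by simp
                rw [this]
                exact le_trans (mvHeight_monomial_le _ _) (by simp)
            _ ≤ K2 ^ (0 + 1) := by simpa using hK2one
        · simp [h0, mvHeight]
  | succ b ih =>
      obtain ⟨A, hA1, hA2, hA3⟩ := ih
      obtain ⟨e, rfl⟩ : ∃ e, d = e + 1 := ⟨d - 1, (Nat.succ_pred_eq_of_pos hd1).symm⟩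
      have he : e < e + 1 := Nat.lt_succ_self e
      refine ⟨fun j => (if j = 0 then 0 else D * A (j - 1)) + A e * cf j, ?_, ?_, ?_⟩
      · -- identity
        have hRHS : ∑ j ∈ Finset.range (e + 1),
            MvPolynomial.aeval ω ((if j = 0 then 0 else D * A (j - 1)) + A e * cf j) * χ ^ j =
            (∑ i ∈ Finset.range e, MvPolynomial.aeval ω (D * A i) * χ ^ (i + 1)) +
              ∑ j ∈ Finset.range (e + 1), MvPolynomial.aeval ω (A e * cf j) * χ ^ j := by
          have hsplit : ∀ j ∈ Finset.range (e + 1),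
              MvPolynomial.aeval ω ((if j = 0 then 0 else D * A (j - 1)) + A e * cf j) * χ ^ j =
              MvPolynomial.aeval ω (if j = 0 then 0 else D * A (j - 1)) * χ ^ j +
                MvPolynomial.aeval ω (A e * cf j) * χ ^ j := by
            intro j _
            rw [map_add, add_mul]
          rw [Finset.sum_congr rfl hsplit, Finset.sum_add_distrib]
          congr 1
          rw [Finset.sum_range_succ']
          simp
        rw [hRHS]
        have expand : (MvPolynomial.aeval ω D) ^ (b + 1) * χ ^ (b + 1) =
            MvPolynomial.aeval ω D * χ * ((MvPolynomial.aeval ω D) ^ b * χ ^ b) := by ring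
        rw [expand, hA1, Finset.mul_sum]
        calc ∑ j ∈ Finset.range (e + 1),
              MvPolynomial.aeval ω D * χ * (MvPolynomial.aeval ω (A j) * χ ^ j)
            = ∑ j ∈ Finset.range (e + 1), MvPolynomial.aeval ω (D * A j) * χ ^ (j + 1) := by
              refine Finset.sum_congr rfl fun j _ => ?_
              rw [map_mul]
              ring
          _ = (∑ i ∈ Finset.range e, MvPolynomial.aeval ω (D * A i) * χ ^ (i + 1)) +
                MvPolynomial.aeval ω (D * A e) * χ ^ (e + 1) := Finset.sum_range_succ _ _
          _ = (∑ i ∈ Finset.range e, MvPolynomial.aeval ω (D * A i) * χ ^ (i + 1)) +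
                ∑ j ∈ Finset.range (e + 1), MvPolynomial.aeval ω (A e * cf j) * χ ^ j := by
              congr 1
              rw [map_mul, mul_comm (MvPolynomial.aeval ω D) (MvPolynomial.aeval ω (A e)),
                mul_assoc, hrel, Finset.mul_sum]
              refine Finset.sum_congr rfl fun j _ => ?_
              rw [map_mul]
              ring
      · -- degree bound
        intro j hj
        refine le_trans (MvPolynomial.totalDegree_add _ _) ?_
        rw [max_le_iff]
        constructor
        · split
          · simp
          · refine le_trans (MvPolynomial.totalDegree_mul _ _) ?_
            have : j - 1 < e + 1 := by omega
            have := hA2 (j - 1) this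
            calc D.totalDegree + (A (j - 1)).totalDegree ≤ K1 + K1 * b := by
                  exact Nat.add_le_add hK1D (hA2 (j - 1) (by omega))
              _ ≤ K1 * (b + 1) := by ring_nf; omega
        · refine le_trans (MvPolynomial.totalDegree_mul _ _) ?_
          calc (A e).totalDegree + (cf j).totalDegree ≤ K1 * b + K1 :=
                Nat.add_le_add (hA2 e he) (hK1c j hj)
            _ ≤ K1 * (b + 1) := by ring_nf; omega
      · -- height bound
        intro j hj
        refine le_trans (mvHeight_add_le _ _) ?_
        have hterm1 : mvHeight (if j = 0 then 0 else D * A (j - 1)) ≤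
            (D.support.card * mvHeight D) * K2 ^ (b + 1) := by
          split
          · simp [mvHeight]
          · refine le_trans (mvHeight_mul_le _ _) ?_
            exact Nat.mul_le_mul le_rfl (hA3 (j - 1) (by omega))
        have hterm2 : mvHeight (A e * cf j) ≤
            ((cf j).support.card * mvHeight (cf j)) * K2 ^ (b + 1) := by
          rw [mul_comm (A e) (cf j)]
          refine le_trans (mvHeight_mul_le _ _) ?_
          exact Nat.mul_le_mul le_rfl (hA3 e he)
        refine le_trans (Nat.add_le_add hterm1 hterm2) ?_
        rw [← Nat.add_mul]
        have hcoef : D.support.card * mvHeight D + (cf j).support.card * mvHeight (cf j) ≤ K2 := by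
          have hmem' : (cf j).support.card * mvHeight (cf j) ≤
              ∑ k ∈ Finset.range (e + 1), (cf k).support.card * mvHeight (cf k) :=
            Finset.single_le_sum (f := fun k => (cf k).support.card * mvHeight (cf k))
              (fun _ _ => Nat.zero_le _) (Finset.mem_range.2 hj)
          omega
        calc (D.support.card * mvHeight D + (cf j).support.card * mvHeight (cf j)) * K2 ^ (b + 1)
            ≤ K2 * K2 ^ (b + 1) := Nat.mul_le_mul hcoef le_rfl
          _ = K2 ^ (b + 1 + 1) := by ring

end AuxTEB
namespace AuxTEB
lemma aeval_snoc (q : ℕ) (ω : Fin q → ℂ) (χ : ℂ) (P : MvPolynomial (Fin (q + 1)) ℤ) :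
    MvPolynomial.aeval (Fin.snoc ω χ) P = ∑ m ∈ P.support,
      ((MvPolynomial.coeff m P : ℤ) : ℂ) * ((∏ i : Fin q, ω i ^ m i.castSucc) * χ ^ m (Fin.last q)) := by
  rw [MvPolynomial.aeval_def, MvPolynomial.eval₂_eq']
  refine Finset.sum_congr rfl fun m _ => ?_
  rw [Fin.prod_univ_castSucc]
  simp [Fin.snoc_castSucc, Fin.snoc_last, eq_intCast]

lemma aeval_monomial_eq {q : ℕ} (ω : Fin q → ℂ) (a : Fin q →₀ ℕ) (c : ℤ) :
    MvPolynomial.aeval ω (MvPolynomial.monomial a c) =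
      (c : ℂ) * ∏ i : Fin q, ω i ^ a i := by
  rw [MvPolynomial.aeval_monomial, Finsupp.prod_pow]
  simp [eq_intCast]

lemma sum_castSucc_le {q : ℕ} (m : Fin (q + 1) →₀ ℕ) :
    (∑ i : Fin q, m i.castSucc) ≤ m.sum fun _ e => e := by
  rw [Finsupp.sum_fintype _ _ (fun _ => rfl), Fin.sum_univ_castSucc]
  exact Nat.le_add_right _ _
end AuxTEB

set_option maxHeartbeats 1000000

/-- Let `ω_1,…,ω_q ∈ ℂ` be algebraically independent and `χ` integral over
`ℤ[ω_1,…,ω_q]` of degree `d` over the fraction field `ℚ(ω_1,…,ω_q)`. There is a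
constant `c > 0` such that every nonzero `P ∈ ℤ[X_1,…,X_q,Y]` admits a
representation `Q(ω)·P(ω,χ) = Σ_{i=1}^{d} Q_i(ω)·χ^{i−1}` with `Q(ω) ≠ 0` and
all the types of `Q, Q_1,…,Q_d` at most `c·t(P) + c·log(2 + deg P)`. -/
theorem type_of_element_bound (q : ℕ) (hq : 1 ≤ q) (ω : Fin q → ℂ)
    (hω : AlgebraicIndependent ℚ ω) (χ : ℂ)
    (hχ : IsIntegral (Algebra.adjoin ℤ (Set.range ω)) χ) (d : ℕ)
    (hd : d = (minpoly (IntermediateField.adjoin ℚ (Set.range ω)) χ).natDegree) :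
    ∃ c > (0 : ℝ), ∀ P : MvPolynomial (Fin (q + 1)) ℤ, P ≠ 0 →
      ∃ (Q : MvPolynomial (Fin q) ℤ) (Qi : Fin d → MvPolynomial (Fin q) ℤ),
        MvPolynomial.aeval ω Q ≠ 0 ∧
        MvPolynomial.aeval ω Q * MvPolynomial.aeval (Fin.snoc ω χ) P =
          ∑ i : Fin d, MvPolynomial.aeval ω (Qi i) * χ ^ (i : ℕ) ∧
        mvType Q ≤ c * mvType P + c * Real.log (2 + (P.totalDegree : ℝ)) ∧
        ∀ i, mvType (Qi i) ≤ c * mvType P + c * Real.log (2 + (P.totalDegree : ℝ)) := by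
  classical
  obtain ⟨hd1, D, cf, hD, hrel⟩ := AuxTEB.exists_relation ω χ hχ d hd
  set K1 : ℕ := max D.totalDegree ((Finset.range d).sup fun j => (cf j).totalDegree)
    with hK1def
  set K2 : ℕ := D.support.card * mvHeight D +
      (∑ j ∈ Finset.range d, (cf j).support.card * mvHeight (cf j)) + 1 with hK2def
  have hK1D : D.totalDegree ≤ K1 := by rw [hK1def]; exact le_max_left _ _
  have hK1c : ∀ j < d, (cf j).totalDegree ≤ K1 := by
    intro j hj
    rw [hK1def]
    exact le_trans (Finset.le_sup (f := fun j => (cf j).totalDegree)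
      (Finset.mem_range.2 hj)) (le_max_right _ _)
  have hrec := AuxTEB.recursion hd1 ω χ D cf hrel K1 K2 hK1D hK1c hK2def.ge
  choose A hA1 hA2 hA3 using hrec
  have hDne : D ≠ 0 := fun h => hD (by simp [h])
  have hSD1 : 1 ≤ D.support.card :=
    Finset.card_pos.2 (MvPolynomial.support_nonempty.2 hDne)
  have hHD1 : 1 ≤ mvHeight D := AuxTEB.mvHeight_pos hDne
  set E : ℕ := D.support.card * mvHeight D with hEdef
  have hE1 : 1 ≤ E := by rw [hEdef]; exact Nat.mul_pos hSD1 hHD1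
  set E2 : ℕ := (D.support.card + 1) * (E + 1) * (K2 + 1) with hE2def
  have hE21 : 1 ≤ E2 := by
    rw [hE2def]
    exact Nat.mul_pos (Nat.mul_pos (Nat.succ_pos _) (Nat.succ_pos _)) (Nat.succ_pos _)
  set k1 : ℝ := (K1 : ℝ) with hk1def
  set eE : ℝ := Real.log E with heEdef
  set e2 : ℝ := Real.log E2 with he2def
  have hk1 : 0 ≤ k1 := Nat.cast_nonneg _
  have heE : 0 ≤ eE := Real.log_nonneg (by exact_mod_cast hE1)
  have he2 : 0 ≤ e2 := Real.log_nonneg (by exact_mod_cast hE21)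
  set c : ℝ := 2 * k1 + (q : ℝ) + 3 + 3 * e2 + 3 * eE with hcdef
  have hc0 : 0 < c := by positivity
  refine ⟨c, hc0, ?_⟩
  intro P hP
  set N := P.totalDegree with hNdef
  set t := mvType P with htdef
  set L := Real.log (2 + (N : ℝ)) with hLdef
  have htN : (N : ℝ) ≤ t := le_max_left _ _
  have htH : Real.log (mvHeight P) ≤ t := le_max_right _ _
  have ht0 : 0 ≤ t := AuxTEB.mvType_nonneg P
  have hN0 : (0:ℝ) ≤ (N:ℝ) := Nat.cast_nonneg _
  have hlog2 : Real.log 2 ≤ L := Real.log_le_log (by norm_num) (by linarith)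
  have hL0 : 0 ≤ L := le_trans (Real.log_nonneg (by norm_num)) hlog2
  have hL1 : (1 : ℝ) ≤ 2 * L := by nlinarith [Real.log_two_gt_d9]
  have hlogN1 : Real.log ((N : ℝ) + 1) ≤ L :=
    Real.log_le_log (by positivity) (by linarith)
  -- monomial data
  set b : (Fin (q + 1) →₀ ℕ) → ℕ := fun m => m (Fin.last q) with hbdef
  set a : (Fin (q + 1) →₀ ℕ) → (Fin q →₀ ℕ) := fun m =>
    Finsupp.comapDomain Fin.castSucc m ((Fin.castSucc_injective q).injOn) with hadef
  have ha : ∀ m i, a m i = m i.castSucc := fun m i => rfl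
  have hbN : ∀ m ∈ P.support, b m ≤ N := fun m hm =>
    le_trans (AuxTEB.apply_le_sum m (Fin.last q)) (MvPolynomial.le_totalDegree hm)
  have hasum : ∀ m ∈ P.support, ((a m).sum fun _ e => e) ≤ N := by
    intro m hm
    rw [Finsupp.sum_fintype _ _ (fun _ => rfl)]
    calc (∑ i : Fin q, a m i) = ∑ i : Fin q, m i.castSucc :=
          Finset.sum_congr rfl fun i _ => ha m i
      _ ≤ m.sum fun _ e => e := AuxTEB.sum_castSucc_le m
      _ ≤ N := MvPolynomial.le_totalDegree hm
  set Q : MvPolynomial (Fin q) ℤ := D ^ N with hQdef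
  set Qi' : ℕ → MvPolynomial (Fin q) ℤ := fun j => ∑ m ∈ P.support,
      MvPolynomial.monomial (a m) (MvPolynomial.coeff m P) *
        (D ^ (N - b m) * A (b m) j) with hQidef
  refine ⟨Q, fun i => Qi' i.val, ?_, ?_, ?_, ?_⟩
  · rw [hQdef, map_pow]
    exact pow_ne_zero _ hD
  · -- the identity
    have key : ∀ m ∈ P.support,
        MvPolynomial.aeval ω Q * (((MvPolynomial.coeff m P : ℤ) : ℂ) *
          ((∏ i : Fin q, ω i ^ m i.castSucc) * χ ^ m (Fin.last q))) =
        ∑ j ∈ Finset.range d, MvPolynomial.aeval ω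
          (MvPolynomial.monomial (a m) (MvPolynomial.coeff m P) *
            (D ^ (N - b m) * A (b m) j)) * χ ^ j := by
      intro m hm
      have hbm : b m ≤ N := hbN m hm
      have hsplitQ : MvPolynomial.aeval ω Q =
          (MvPolynomial.aeval ω D) ^ (N - b m) * (MvPolynomial.aeval ω D) ^ b m := by
        rw [hQdef, map_pow, ← pow_add, Nat.sub_add_cancel hbm]
      have hprod : ∀ j, MvPolynomial.aeval ω
          (MvPolynomial.monomial (a m) (MvPolynomial.coeff m P) *
            (D ^ (N - b m) * A (b m) j)) =
          ((MvPolynomial.coeff m P : ℤ) : ℂ) * (∏ i : Fin q, ω i ^ m i.castSucc) *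
            ((MvPolynomial.aeval ω D) ^ (N - b m) *
              MvPolynomial.aeval ω (A (b m) j)) := by
        intro j
        rw [map_mul, map_mul, map_pow, AuxTEB.aeval_monomial_eq]
        have : (∏ i : Fin q, ω i ^ a m i) = ∏ i : Fin q, ω i ^ m i.castSucc :=
          Finset.prod_congr rfl fun i _ => by rw [ha m i]
        rw [this]
        try ring
      calc MvPolynomial.aeval ω Q * (((MvPolynomial.coeff m P : ℤ) : ℂ) *
            ((∏ i : Fin q, ω i ^ m i.castSucc) * χ ^ m (Fin.last q)))
          = (((MvPolynomial.coeff m P : ℤ) : ℂ) * (∏ i : Fin q, ω i ^ m i.castSucc) *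
              (MvPolynomial.aeval ω D) ^ (N - b m)) *
              ((MvPolynomial.aeval ω D) ^ b m * χ ^ b m) := by
            rw [hsplitQ]; ring
        _ = (((MvPolynomial.coeff m P : ℤ) : ℂ) * (∏ i : Fin q, ω i ^ m i.castSucc) *
              (MvPolynomial.aeval ω D) ^ (N - b m)) *
              ∑ j ∈ Finset.range d, MvPolynomial.aeval ω (A (b m) j) * χ ^ j := by
            rw [hA1 (b m)]
        _ = ∑ j ∈ Finset.range d, MvPolynomial.aeval ω
              (MvPolynomial.monomial (a m) (MvPolynomial.coeff m P) *
                (D ^ (N - b m) * A (b m) j)) * χ ^ j := by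
            rw [Finset.mul_sum]
            refine Finset.sum_congr rfl fun j _ => ?_
            rw [hprod j]
            ring
    rw [AuxTEB.aeval_snoc, Finset.mul_sum, Finset.sum_congr rfl key, Finset.sum_comm,
      Fin.sum_univ_eq_sum_range (fun j => MvPolynomial.aeval ω (Qi' j) * χ ^ j) d]
    refine Finset.sum_congr rfl fun j _ => ?_
    rw [hQidef]
    rw [map_sum, Finset.sum_mul]
  · -- type of Q
    have hdeg : (Q.totalDegree : ℝ) ≤ k1 * t := by
      have h1 : Q.totalDegree ≤ N * K1 := by
        rw [hQdef]
        exact le_trans (MvPolynomial.totalDegree_pow D N)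
          (Nat.mul_le_mul le_rfl (le_max_left _ _))
      calc (Q.totalDegree : ℝ) ≤ ((N * K1 : ℕ) : ℝ) := by exact_mod_cast h1
        _ = (N : ℝ) * k1 := by push_cast; ring
        _ ≤ k1 * t := by nlinarith
    have hht : Real.log (mvHeight Q) ≤ (N : ℝ) * eE := by
      have h1 : mvHeight Q ≤ E ^ N := by
        rw [hQdef, hEdef]
        exact AuxTEB.mvHeight_pow_le D N
      have h2 : Real.log (mvHeight Q) ≤ Real.log (((E ^ N : ℕ)) : ℝ) :=
        AuxTEB.log_le_log_of_nat (by exact_mod_cast h1)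
          (by exact_mod_cast Nat.one_le_pow _ _ hE1)
      rw [show (((E ^ N : ℕ)) : ℝ) = (E : ℝ) ^ N by push_cast; ring, Real.log_pow] at h2
      exact h2
    have hck1 : k1 ≤ c := by
      rw [hcdef]
      have h0q : (0:ℝ) ≤ (q:ℝ) := Nat.cast_nonneg q
      linarith
    have hceE : eE ≤ c := by
      rw [hcdef]
      have h0q : (0:ℝ) ≤ (q:ℝ) := Nat.cast_nonneg q
      linarith
    refine AuxTEB.mvType_le ?_ ?_
    · calc ((Q.totalDegree : ℕ) : ℝ) ≤ k1 * t := hdeg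
        _ ≤ c * t := mul_le_mul_of_nonneg_right hck1 ht0
        _ ≤ c * t + c * L := le_add_of_nonneg_right (by positivity)
    · calc Real.log (mvHeight Q) ≤ (N : ℝ) * eE := hht
        _ ≤ t * eE := mul_le_mul_of_nonneg_right htN heE
        _ = eE * t := mul_comm _ _
        _ ≤ c * t := mul_le_mul_of_nonneg_right hceE ht0
        _ ≤ c * t + c * L := le_add_of_nonneg_right (by positivity)
  · -- types of the Qi
    intro i
    have hiv : (i : ℕ) < d := i.2
    -- degree bound
    have hdeg : ((Qi' i).totalDegree : ℝ) ≤ (1 + 2 * k1) * t := by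
      have h1 : (Qi' i).totalDegree ≤ N + (N * K1 + K1 * N) := by
        rw [hQidef]
        refine le_trans (MvPolynomial.totalDegree_finset_sum _ _) ?_
        refine Finset.sup_le fun m hm => ?_
        refine le_trans (MvPolynomial.totalDegree_mul _ _) ?_
        refine Nat.add_le_add ?_ ?_
        · rw [MvPolynomial.totalDegree_monomial _
            (MvPolynomial.mem_support_iff.1 hm)]
          exact hasum m hm
        · refine le_trans (MvPolynomial.totalDegree_mul _ _) (Nat.add_le_add ?_ ?_)
          · refine le_trans (MvPolynomial.totalDegree_pow D _) ?_
            exact Nat.mul_le_mul (Nat.sub_le N (b m)) (le_max_left _ _)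
          · exact le_trans (hA2 (b m) (i : ℕ) hiv) (Nat.mul_le_mul le_rfl (hbN m hm))
      calc ((Qi' i).totalDegree : ℝ) ≤ ((N + (N * K1 + K1 * N) : ℕ) : ℝ) := by
            exact_mod_cast h1
        _ = (N : ℝ) * (1 + 2 * k1) := by push_cast; ring
        _ ≤ (1 + 2 * k1) * t := by nlinarith
    -- height bound
    have hh1 : mvHeight (Qi' i) ≤ P.support.card * (mvHeight P * E2 ^ (N + 1)) := by
      rw [hQidef]
      refine le_trans (AuxTEB.mvHeight_sum_le _ _) ?_
      have hterm : ∀ m ∈ P.support,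
          mvHeight (MvPolynomial.monomial (a m) (MvPolynomial.coeff m P) *
            (D ^ (N - b m) * A (b m) i)) ≤ mvHeight P * E2 ^ (N + 1) := by
        intro m hm
        have hbm : b m ≤ N := hbN m hm
        refine le_trans (AuxTEB.mvHeight_mul_le _ _) ?_
        have hS : (MvPolynomial.monomial (a m) (MvPolynomial.coeff m P)).support.card ≤ 1 :=
          AuxTEB.support_card_monomial_le _ _
        have hH : mvHeight (MvPolynomial.monomial (a m) (MvPolynomial.coeff m P)) ≤
            mvHeight P := le_trans (AuxTEB.mvHeight_monomial_le _ _)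
              (AuxTEB.natAbs_coeff_le P m)
        have hrest : mvHeight (D ^ (N - b m) * A (b m) i) ≤ E2 ^ (N + 1) := by
          refine le_trans (AuxTEB.mvHeight_mul_le _ _) ?_
          have c1 : (D ^ (N - b m)).support.card ≤ (D.support.card + 1) ^ (N - b m) :=
            le_trans (AuxTEB.support_card_pow_le D _)
              (Nat.pow_le_pow_left (Nat.le_succ _) _)
          have c2 : mvHeight (D ^ (N - b m)) ≤ (E + 1) ^ (N - b m) := by
            refine le_trans (AuxTEB.mvHeight_pow_le D _) ?_
            rw [← hEdef]
            exact Nat.pow_le_pow_left (Nat.le_succ _) _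
          have c3 : mvHeight (A (b m) i) ≤ (K2 + 1) ^ (b m + 1) :=
            le_trans (hA3 (b m) (i : ℕ) hiv) (Nat.pow_le_pow_left (Nat.le_succ _) _)
          calc (D ^ (N - b m)).support.card * mvHeight (D ^ (N - b m)) *
                mvHeight (A (b m) i)
              ≤ (D.support.card + 1) ^ (N - b m) * (E + 1) ^ (N - b m) *
                (K2 + 1) ^ (b m + 1) :=
                Nat.mul_le_mul (Nat.mul_le_mul c1 c2) c3
            _ = ((D.support.card + 1) * (E + 1)) ^ (N - b m) * (K2 + 1) ^ (b m + 1) := by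
                rw [Nat.mul_pow]
            _ ≤ E2 ^ (N - b m) * E2 ^ (b m + 1) := by
                rw [hE2def]
                refine Nat.mul_le_mul (Nat.pow_le_pow_left ?_ _)
                  (Nat.pow_le_pow_left ?_ _)
                · exact Nat.le_mul_of_pos_right _ (Nat.succ_pos _)
                · exact Nat.le_mul_of_pos_left _
                    (Nat.mul_pos (Nat.succ_pos _) (Nat.succ_pos _))
            _ = E2 ^ (N + 1) := by
                rw [← pow_add]
                congr 1
                omega
        calc (MvPolynomial.monomial (a m) (MvPolynomial.coeff m P)).support.card *
              mvHeight (MvPolynomial.monomial (a m) (MvPolynomial.coeff m P)) *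
              mvHeight (D ^ (N - b m) * A (b m) i)
            ≤ 1 * mvHeight P * E2 ^ (N + 1) :=
              Nat.mul_le_mul (Nat.mul_le_mul hS hH) hrest
          _ = mvHeight P * E2 ^ (N + 1) := by rw [one_mul]
      refine le_trans (Finset.sum_le_card_nsmul _ _ _ hterm) ?_
      rw [smul_eq_mul]
    have hcard : P.support.card ≤ (N + 1) ^ (q + 1) := AuxTEB.support_card_le P
    have hcard1 : 1 ≤ P.support.card :=
      Finset.card_pos.2 (MvPolynomial.support_nonempty.2 hP)
    have hHP1 : 1 ≤ mvHeight P := AuxTEB.mvHeight_pos hP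
    have hht : Real.log (mvHeight (Qi' i)) ≤
        ((q : ℝ) + 1) * L + t + ((N : ℝ) + 1) * e2 := by
      have h2 : Real.log (mvHeight (Qi' i)) ≤
          Real.log ((P.support.card : ℝ) * ((mvHeight P : ℝ) * (E2 : ℝ) ^ (N + 1))) := by
        refine AuxTEB.log_le_log_of_nat ?_ ?_
        · push_cast
          exact_mod_cast hh1
        · have h3 : (1 : ℝ) ≤ (P.support.card : ℝ) := by exact_mod_cast hcard1
          have h4 : (1 : ℝ) ≤ (mvHeight P : ℝ) := by exact_mod_cast hHP1
          have h5 : (1 : ℝ) ≤ (E2 : ℝ) ^ (N + 1) := by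
            exact_mod_cast Nat.one_le_pow _ _ hE21
          calc (1 : ℝ) ≤ (P.support.card : ℝ) := h3
            _ ≤ (P.support.card : ℝ) * ((mvHeight P : ℝ) * (E2 : ℝ) ^ (N + 1)) :=
              le_mul_of_one_le_right (by linarith) (by nlinarith)
      have h5 : (0 : ℝ) < (P.support.card : ℝ) := by exact_mod_cast hcard1
      have h6 : (0 : ℝ) < (mvHeight P : ℝ) := by exact_mod_cast hHP1
      have h7 : (0 : ℝ) < (E2 : ℝ) ^ (N + 1) := pow_pos (by exact_mod_cast hE21) _
      rw [Real.log_mul (ne_of_gt h5) (ne_of_gt (mul_pos h6 h7)),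
        Real.log_mul (ne_of_gt h6) (ne_of_gt h7), Real.log_pow] at h2
      have hlc : Real.log (P.support.card : ℝ) ≤ ((q : ℝ) + 1) * L := by
        have h8 : Real.log (P.support.card : ℝ) ≤
            Real.log ((((N + 1) ^ (q + 1) : ℕ)) : ℝ) := by
          refine AuxTEB.log_le_log_of_nat (by exact_mod_cast hcard) ?_
          exact_mod_cast Nat.one_le_pow _ _ (Nat.succ_pos N)
        rw [show ((((N + 1) ^ (q + 1) : ℕ)) : ℝ) = ((N : ℝ) + 1) ^ (q + 1) by
          push_cast; ring, Real.log_pow] at h8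
        calc Real.log (P.support.card : ℝ) ≤
              ((q + 1 : ℕ) : ℝ) * Real.log ((N : ℝ) + 1) := h8
          _ ≤ ((q : ℝ) + 1) * L := by
              refine mul_le_mul ?_ hlogN1 ?_ ?_
              · exact le_of_eq (by push_cast; ring)
              · exact Real.log_nonneg (by linarith)
              · positivity
      have h9 : ((N + 1 : ℕ) : ℝ) * Real.log (E2 : ℝ) = ((N : ℝ) + 1) * e2 := by
        rw [he2def]; push_cast; ring
      rw [h9] at h2
      linarith [h2, hlc, htH]
    -- combine
    have hca : 1 + e2 ≤ c := by
      rw [hcdef]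
      have : (0:ℝ) ≤ (q:ℝ) := Nat.cast_nonneg q
      linarith
    have hcb : (q : ℝ) + 1 + 2 * e2 ≤ c := by
      rw [hcdef]; linarith
    have hcc : 1 + 2 * k1 ≤ c := by
      rw [hcdef]
      have : (0:ℝ) ≤ (q:ℝ) := Nat.cast_nonneg q
      linarith
    refine AuxTEB.mvType_le ?_ ?_
    · calc ((Qi' i).totalDegree : ℝ) ≤ (1 + 2 * k1) * t := hdeg
        _ ≤ c * t := mul_le_mul_of_nonneg_right hcc ht0
        _ ≤ c * t + c * L := le_add_of_nonneg_right (by positivity)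
    · have h10 : ((N : ℝ) + 1) * e2 ≤ (t + 2 * L) * e2 :=
        mul_le_mul_of_nonneg_right (by linarith) he2
      calc Real.log (mvHeight (Qi' i)) ≤ ((q : ℝ) + 1) * L + t + ((N : ℝ) + 1) * e2 := hht
        _ ≤ ((q : ℝ) + 1) * L + t + (t + 2 * L) * e2 := by linarith
        _ = (1 + e2) * t + ((q : ℝ) + 1 + 2 * e2) * L := by ring
        _ ≤ c * t + c * L := add_le_add (mul_le_mul_of_nonneg_right hca ht0)
            (mul_le_mul_of_nonneg_right hcb hL0)
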